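/- arXiv:q-alg/9602035 — 5 statements merged into one kernel-verified Lean document; each statement's English description precedes it below -/
import Mathlib

section
/- In the quantum plane with q not a root of unity, there is no nonzero middle-linear metric on the bimodule of 1-forms: any family of elements g_{ξξ}, g_{ξη}, g_{ηξ}, g_{ηη} ∈ A satisfying the middle-linearity equations x·g_{ξξ} = q⁴·g_{ξξ}·x, y·g_{ξξ} = q²·g_{ξξ}·y, x·g_{ξη} = q³·g_{ξη}·x + q²(q²−1)·g_{ξξ}·y, y·g_{ξη} = q³·g_{ξη}·y, x·g_{ηξ} = q³·g_{ηξ}·x + q(q²−1)·g_{ξξ}·y, y·g_{ηξ} = q³·g_{ηξ}·y, x·g_{ηη} = q²·g_{ηη}·x + q²(q²−1)·g_{ξη}·y + q(q²−1)·g_{ηξ}·y, y·g_{ηη} = q⁴·g_{ηη}·y must be identically zero. -/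
inductive QRel (q : ℂ) : FreeAlgebra ℂ (Fin 2) → FreeAlgebra ℂ (Fin 2) → Prop
  | rel : QRel q (FreeAlgebra.ι ℂ 0 * FreeAlgebra.ι ℂ 1)
      (q • (FreeAlgebra.ι ℂ 1 * FreeAlgebra.ι ℂ 0))

abbrev QPlane (q : ℂ) : Type := RingQuot (QRel q)

noncomputable def Qx (q : ℂ) : QPlane q :=
  RingQuot.mkAlgHom ℂ (QRel q) (FreeAlgebra.ι ℂ 0)

noncomputable def Qy (q : ℂ) : QPlane q :=
  RingQuot.mkAlgHom ℂ (QRel q) (FreeAlgebra.ι ℂ 1)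

noncomputable section AuxQP

abbrev VV : Type := (ℕ × ℕ) →₀ ℂ

def sh1 : VV →ₗ[ℂ] VV := Finsupp.lmapDomain ℂ ℂ (fun pr => (pr.1 + 1, pr.2))
def sh2 : VV →ₗ[ℂ] VV := Finsupp.lmapDomain ℂ ℂ (fun pr => (pr.1, pr.2 + 1))
def dg (h : ℕ × ℕ → ℂ) : VV →ₗ[ℂ] VV :=
  Finsupp.lsum ℂ fun pr => h pr • Finsupp.lsingle pr

lemma sh1_single (a : ℕ × ℕ) (c : ℂ) :
    sh1 (Finsupp.single a c) = Finsupp.single (a.1 + 1, a.2) c := by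
  simp only [sh1, Finsupp.lmapDomain_apply, Finsupp.mapDomain_single]

lemma sh2_single (a : ℕ × ℕ) (c : ℂ) :
    sh2 (Finsupp.single a c) = Finsupp.single (a.1, a.2 + 1) c := by
  simp only [sh2, Finsupp.lmapDomain_apply, Finsupp.mapDomain_single]

lemma dg_single (h : ℕ × ℕ → ℂ) (a : ℕ × ℕ) (c : ℂ) :
    dg h (Finsupp.single a c) = Finsupp.single a (h a * c) := by
  simp only [dg, Finsupp.lsum_single, LinearMap.smul_apply, Finsupp.lsingle_apply,
    Finsupp.smul_single, smul_eq_mul]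

lemma dg_apply (h : ℕ × ℕ → ℂ) (v : VV) (a : ℕ × ℕ) :
    dg h v a = h a * v a := by
  induction v using Finsupp.induction_linear with
  | zero => simp
  | add f g hf hg => simp [hf, hg, mul_add]
  | single b c =>
      rw [dg_single]
      rcases eq_or_ne b a with rfl | hba
      · simp
      · simp [Finsupp.single_apply, hba]

variable (q : ℂ)

def opX : Module.End ℂ VV := sh1 ∘ₗ dg (fun pr => q ^ pr.2)
def opT : Module.End ℂ VV := sh2 ∘ₗ dg (fun pr => q ^ pr.1)

lemma opX_single (a : ℕ × ℕ) (c : ℂ) :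
    opX q (Finsupp.single a c) = Finsupp.single (a.1 + 1, a.2) (q ^ a.2 * c) := by
  simp only [opX, LinearMap.comp_apply, dg_single, sh1_single]

lemma opT_single (a : ℕ × ℕ) (c : ℂ) :
    opT q (Finsupp.single a c) = Finsupp.single (a.1, a.2 + 1) (q ^ a.1 * c) := by
  simp only [opT, LinearMap.comp_apply, dg_single, sh2_single]

abbrev sh2E : Module.End ℂ VV := sh2

lemma comm_sh1_opX : Commute (sh1 : Module.End ℂ VV) (opX q) := by
  apply Finsupp.lhom_ext (φ := (sh1 : Module.End ℂ VV) * opX q)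
    (ψ := opX q * (sh1 : Module.End ℂ VV))
  intro a b
  simp only [Module.End.mul_apply, opX_single, sh1_single]

lemma comm_sh1_sh2 : Commute (sh1 : Module.End ℂ VV) sh2E := by
  apply Finsupp.lhom_ext (φ := (sh1 : Module.End ℂ VV) * sh2E)
    (ψ := sh2E * (sh1 : Module.End ℂ VV))
  intro a b
  simp only [Module.End.mul_apply, sh2E, sh1_single, sh2_single]

lemma comm_opT_opX : Commute (opT q) (opX q) := by
  apply Finsupp.lhom_ext (φ := opT q * opX q) (ψ := opX q * opT q)
  intro a b
  simp only [Module.End.mul_apply, opX_single, opT_single]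
  congr 1
  ring

lemma comm_opT_sh2 : Commute (opT q) sh2E := by
  apply Finsupp.lhom_ext (φ := opT q * sh2E) (ψ := sh2E * opT q)
  intro a b
  simp only [Module.End.mul_apply, sh2E, sh2_single, opT_single]

def fA : FreeAlgebra ℂ (Fin 2) →ₐ[ℂ] Module.End ℂ VV :=
  FreeAlgebra.lift ℂ ![opX q, sh2E]

lemma fA_rel : ∀ ⦃a b : FreeAlgebra ℂ (Fin 2)⦄, QRel q a b → fA q a = fA q b := by
  rintro _ _ ⟨⟩
  rw [map_mul, map_smul, map_mul]
  simp only [fA, FreeAlgebra.lift_ι_apply]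
  show (opX q) * sh2E = q • (sh2E * opX q)
  apply Finsupp.lhom_ext (φ := opX q * sh2E) (ψ := q • (sh2E * opX q))
  intro a b
  simp only [LinearMap.smul_apply, Module.End.mul_apply, sh2E, sh2_single, opX_single,
    Finsupp.smul_single, smul_eq_mul]
  congr 1
  ring

def rho : QPlane q →ₐ[ℂ] Module.End ℂ VV :=
  RingQuot.liftAlgHom ℂ ⟨fA q, fA_rel q⟩

lemma rho_mk (a : FreeAlgebra ℂ (Fin 2)) :
    rho q (RingQuot.mkAlgHom ℂ (QRel q) a) = fA q a :=
  RingQuot.liftAlgHom_mkAlgHom_apply ℂ (fA q) (fA_rel q) a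

@[simp] lemma rho_Qx : rho q (Qx q) = opX q := by
  rw [Qx, rho_mk]; simp [fA, FreeAlgebra.lift_ι_apply]

@[simp] lemma rho_Qy : rho q (Qy q) = sh2E := by
  rw [Qy, rho_mk]; simp [fA, FreeAlgebra.lift_ι_apply]

lemma comm_sh1_rho (g : QPlane q) : Commute (sh1 : Module.End ℂ VV) (rho q g) := by
  obtain ⟨a, rfl⟩ := RingQuot.mkAlgHom_surjective ℂ (QRel q) g
  rw [rho_mk]
  induction a using FreeAlgebra.induction with
  | grade0 r => rw [AlgHom.commutes]; exact (Algebra.commutes r _).symm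
  | grade1 i =>
      fin_cases i
      · simpa [fA, FreeAlgebra.lift_ι_apply] using comm_sh1_opX q
      · simpa [fA, FreeAlgebra.lift_ι_apply] using comm_sh1_sh2
  | mul a b ha hb => rw [map_mul]; exact ha.mul_right hb
  | add a b ha hb => rw [map_add]; exact ha.add_right hb

lemma comm_opT_rho (g : QPlane q) : Commute (opT q) (rho q g) := by
  obtain ⟨a, rfl⟩ := RingQuot.mkAlgHom_surjective ℂ (QRel q) g
  rw [rho_mk]
  induction a using FreeAlgebra.induction with
  | grade0 r => rw [AlgHom.commutes]; exact (Algebra.commutes r _).symm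
  | grade1 i =>
      fin_cases i
      · simpa [fA, FreeAlgebra.lift_ι_apply] using comm_opT_opX q
      · simpa [fA, FreeAlgebra.lift_ι_apply] using comm_opT_sh2 q
  | mul a b ha hb => rw [map_mul]; exact ha.mul_right hb
  | add a b ha hb => rw [map_add]; exact ha.add_right hb

def e00 : VV := Finsupp.single (0, 0) 1

lemma rho_mul_Qx (g : QPlane q) :
    rho q (g * Qx q) e00 = sh1 (rho q g e00) := by
  rw [map_mul, Module.End.mul_apply, rho_Qx]
  have h1 : opX q e00 = sh1 e00 := by
    rw [e00, opX_single, sh1_single]; norm_num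
  rw [h1, ← Module.End.mul_apply, ← (comm_sh1_rho q g).eq, Module.End.mul_apply]

lemma rho_mul_Qy (g : QPlane q) :
    rho q (g * Qy q) e00 = opT q (rho q g e00) := by
  rw [map_mul, Module.End.mul_apply, rho_Qy]
  have h1 : sh2E e00 = opT q e00 := by
    show sh2 e00 = _
    rw [e00, opT_single, sh2_single]; norm_num
  rw [h1, ← Module.End.mul_apply, ← (comm_opT_rho q g).eq, Module.End.mul_apply]

def Gm : VV →ₗ[ℂ] QPlane q :=
  Finsupp.lsum ℂ fun pr =>
    LinearMap.toSpanSingleton ℂ _ ((q⁻¹) ^ (pr.1 * pr.2) • (Qx q ^ pr.1 * Qy q ^ pr.2))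

lemma Gm_single (a : ℕ × ℕ) (c : ℂ) :
    Gm q (Finsupp.single a c) =
      (c * (q⁻¹) ^ (a.1 * a.2)) • (Qx q ^ a.1 * Qy q ^ a.2) := by
  simp only [Gm, Finsupp.lsum_single, LinearMap.toSpanSingleton_apply, smul_smul]

lemma yx_rel : Qx q * Qy q = q • (Qy q * Qx q) := by
  rw [Qx, Qy, ← map_mul, ← map_mul, ← map_smul]
  exact RingQuot.mkAlgHom_rel ℂ (QRel.rel)

variable (hq0 : q ≠ 0)
include hq0

lemma ypow_x (r : ℕ) : Qy q ^ r * Qx q = (q⁻¹) ^ r • (Qx q * Qy q ^ r) := by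
  induction r with
  | zero => simp
  | succ n ih =>
      have hyx : Qy q * Qx q = q⁻¹ • (Qx q * Qy q) := by
        rw [eq_inv_smul_iff₀ hq0, ← yx_rel]
      calc Qy q ^ (n+1) * Qx q = Qy q ^ n * (Qy q * Qx q) := by
            rw [pow_succ, mul_assoc]
        _ = q⁻¹ • (Qy q ^ n * (Qx q * Qy q)) := by rw [hyx]; simp [mul_smul_comm]
        _ = q⁻¹ • ((Qy q ^ n * Qx q) * Qy q) := by rw [mul_assoc]
        _ = q⁻¹ • (((q⁻¹) ^ n • (Qx q * Qy q ^ n)) * Qy q) := by rw [ih]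
        _ = (q⁻¹) ^ (n+1) • (Qx q * Qy q ^ (n+1)) := by
            rw [smul_mul_assoc, smul_smul, mul_assoc, ← pow_succ, ← pow_succ']

lemma Gm_sh1 (v : VV) : Gm q (sh1 v) = Gm q v * Qx q := by
  have key : (Gm q ∘ₗ sh1) = (LinearMap.mulRight ℂ (Qx q)) ∘ₗ Gm q := by
    apply Finsupp.lhom_ext
    intro a c
    simp only [LinearMap.comp_apply, sh1_single, Gm_single, LinearMap.mulRight_apply]
    rw [smul_mul_assoc, mul_assoc, ypow_x q hq0 a.2, mul_smul_comm, smul_smul,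
      ← mul_assoc (Qx q ^ a.1), ← pow_succ]
    congr 1
    rw [mul_assoc, ← pow_add]
    congr 2
    ring
  exact LinearMap.congr_fun key v

lemma Gm_opT (v : VV) : Gm q (opT q v) = Gm q v * Qy q := by
  have key : (Gm q ∘ₗ opT q) = (LinearMap.mulRight ℂ (Qy q)) ∘ₗ Gm q := by
    apply Finsupp.lhom_ext
    intro a c
    simp only [LinearMap.comp_apply, opT_single, Gm_single, LinearMap.mulRight_apply]
    rw [smul_mul_assoc]
    have hr : Qx q ^ a.1 * Qy q ^ a.2 * Qy q = Qx q ^ a.1 * Qy q ^ (a.2 + 1) := by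
      rw [mul_assoc, ← pow_succ]
    rw [hr]
    congr 1
    have h1 : a.1 * (a.2 + 1) = a.1 * a.2 + a.1 := by ring
    calc q ^ a.1 * c * q⁻¹ ^ (a.1 * (a.2 + 1))
        = c * q⁻¹ ^ (a.1 * a.2) * (q ^ a.1 * q⁻¹ ^ a.1) := by rw [h1, pow_add]; ring
      _ = c * q⁻¹ ^ (a.1 * a.2) := by
          rw [← mul_pow, mul_inv_cancel₀ hq0, one_pow, mul_one]
  exact LinearMap.congr_fun key v

lemma Gm_rho_step (b : FreeAlgebra ℂ (Fin 2)) :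
    ∀ g : QPlane q, Gm q (rho q g e00) = g →
      Gm q (rho q (g * RingQuot.mkAlgHom ℂ (QRel q) b) e00)
        = g * RingQuot.mkAlgHom ℂ (QRel q) b := by
  induction b using FreeAlgebra.induction with
  | grade0 r =>
      intro g hg
      rw [AlgHom.commutes]
      have h2 : g * algebraMap ℂ (QPlane q) r = r • g := by
        rw [Algebra.smul_def, ← Algebra.commutes]
      rw [h2, map_smul, LinearMap.smul_apply, map_smul, hg]
  | grade1 i =>
      intro g hg
      fin_cases i
      · show Gm q (rho q (g * Qx q) e00) = g * Qx q
        rw [rho_mul_Qx, Gm_sh1 q hq0, hg]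
      · show Gm q (rho q (g * Qy q) e00) = g * Qy q
        rw [rho_mul_Qy, Gm_opT q hq0, hg]
  | mul a b ha hb =>
      intro g hg
      rw [map_mul (RingQuot.mkAlgHom ℂ (QRel q)), ← mul_assoc]
      exact hb _ (ha g hg)
  | add a b ha hb =>
      intro g hg
      rw [map_add (RingQuot.mkAlgHom ℂ (QRel q)), mul_add, map_add,
        LinearMap.add_apply, map_add, ha g hg, hb g hg]

lemma Gm_rho (g : QPlane q) : Gm q (rho q g e00) = g := by
  obtain ⟨a, rfl⟩ := RingQuot.mkAlgHom_surjective ℂ (QRel q) g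
  have h1 : Gm q (rho q (1 : QPlane q) e00) = 1 := by
    rw [map_one, Module.End.one_apply, e00, Gm_single]
    norm_num
  have h2 := Gm_rho_step q hq0 a 1 h1
  simpa using h2

lemma rho_e00_injective {g : QPlane q} (h : rho q g e00 = 0) : g = 0 := by
  have h2 := Gm_rho q hq0 g
  rw [h, map_zero] at h2
  exact h2.symm

end AuxQP

lemma vanish_of_y_rel (q : ℂ) (hq0 : q ≠ 0) (hq : ∀ n : ℕ, 0 < n → q ^ n ≠ 1)
    (k : ℕ) (hk : 0 < k) (g : QPlane q)
    (h : Qy q * g = (q ^ k) • (g * Qy q)) : g = 0 := by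
  apply rho_e00_injective q hq0
  set v : VV := rho q g e00 with hv
  have h2 : sh2 v = q ^ k • opT q v := by
    have h3 : rho q (Qy q * g) e00 = q ^ k • rho q (g * Qy q) e00 := by
      rw [h, map_smul, LinearMap.smul_apply]
    rw [rho_mul_Qy, map_mul, Module.End.mul_apply, rho_Qy] at h3
    exact h3
  have h3 : v = q ^ k • dg (fun pr => q ^ pr.1) v := by
    have hinj : Function.Injective (sh2 : VV →ₗ[ℂ] VV) := by
      apply Finsupp.mapDomain_injective
      intro a b hab
      have hab' : (a.1, a.2 + 1) = (b.1, b.2 + 1) := hab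
      simp only [Prod.mk.injEq] at hab'
      exact Prod.ext hab'.1 (Nat.succ_injective hab'.2)
    apply hinj
    rw [h2, map_smul]
    rfl
  ext a
  have h4 := congrFun (congrArg (fun w : VV => (w : (ℕ × ℕ) → ℂ)) h3) a
  simp only [Finsupp.coe_smul, Pi.smul_apply, smul_eq_mul] at h4
  rw [dg_apply] at h4
  have hne : q ^ (k + a.1) ≠ 1 := hq _ (Nat.lt_of_lt_of_le hk (Nat.le_add_right k a.1))
  have h5 : (1 - q ^ (k + a.1)) * v a = 0 := by
    rw [sub_mul, one_mul, pow_add]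
    linear_combination h4
  rcases mul_eq_zero.mp h5 with h' | h'
  · exact absurd (by linear_combination -h') hne
  · simpa using h'

/-- for q not a root of unity there is no nonzero middle-linear
metric on the bimodule of 1-forms of the quantum plane: any family
g₁ = g_{ξξ}, g₂ = g_{ξη}, g₃ = g_{ηξ}, g₄ = g_{ηη} of elements of A satisfying
the middle-linearity equations must vanish identically. -/
theorem no_middle_linear_metric (q : ℂ) (hq0 : q ≠ 0)
    (hq : ∀ n : ℕ, 0 < n → q ^ n ≠ 1)
    (g1 g2 g3 g4 : QPlane q)
    (h1 : Qx q * g1 = (q ^ 4) • (g1 * Qx q))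
    (h2 : Qy q * g1 = (q ^ 2) • (g1 * Qy q))
    (h3 : Qx q * g2 = (q ^ 3) • (g2 * Qx q) + (q ^ 2 * (q ^ 2 - 1)) • (g1 * Qy q))
    (h4 : Qy q * g2 = (q ^ 3) • (g2 * Qy q))
    (h5 : Qx q * g3 = (q ^ 3) • (g3 * Qx q) + (q * (q ^ 2 - 1)) • (g1 * Qy q))
    (h6 : Qy q * g3 = (q ^ 3) • (g3 * Qy q))
    (h7 : Qx q * g4 = (q ^ 2) • (g4 * Qx q) + (q ^ 2 * (q ^ 2 - 1)) • (g2 * Qy q)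
        + (q * (q ^ 2 - 1)) • (g3 * Qy q))
    (h8 : Qy q * g4 = (q ^ 4) • (g4 * Qy q)) :
    g1 = 0 ∧ g2 = 0 ∧ g3 = 0 ∧ g4 = 0 :=
  ⟨vanish_of_y_rel q hq0 hq 2 (by norm_num) g1 h2,
   vanish_of_y_rel q hq0 hq 3 (by norm_num) g2 h4,
   vanish_of_y_rel q hq0 hq 3 (by norm_num) g3 h6,
   vanish_of_y_rel q hq0 hq 4 (by norm_num) g4 h8⟩
end

section
/- In the quantum plane differential calculus, the commutation relation x^n η = q^n η x^n + (q²−1) Q_n ξ x^{n−1} y holds for all n ≥ 1, where Q_n = Σ_{k=1}^{n} q^{2(k−1)}. -/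
/-- in the quantum plane differential calculus,
x^n η = q^n η x^n + (q²−1) Q_n ξ x^{n−1} y for all n ≥ 1, where
Q_n = Σ_{k=1}^{n} q^{2(k−1)} (written below as Σ_{k=0}^{n-1} q^{2k}). -/
theorem xpow_eta_comm (q : ℂ) (hq : q ≠ 0) (Ω : Type*) [Ring Ω] [Algebra ℂ Ω]
    (x y ξ η : Ω)
    (hxy : x * y = q • (y * x))
    (hxξ : x * ξ = (q ^ 2) • (ξ * x))
    (hxη : x * η = q • (η * x) + (q ^ 2 - 1) • (ξ * y))
    (hyξ : y * ξ = q • (ξ * y))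
    (hyη : y * η = (q ^ 2) • (η * y))
    (hηξ : η * ξ = -(q • (ξ * η)))
    (hξξ : ξ * ξ = 0) (hηη : η * η = 0) :
    ∀ n : ℕ, 1 ≤ n →
      x ^ n * η = (q ^ n) • (η * x ^ n) +
        ((q ^ 2 - 1) * ∑ k ∈ Finset.range n, q ^ (2 * k)) • (ξ * x ^ (n - 1) * y) := by
  have hyx : y * x = q⁻¹ • (x * y) := by
    rw [hxy, smul_smul, inv_mul_cancel₀ hq, one_smul]
  have hyxn : ∀ n : ℕ, y * x ^ n = (q⁻¹) ^ n • (x ^ n * y) := by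
    intro n
    induction n with
    | zero => simp
    | succ n ih =>
      rw [pow_succ, ← mul_assoc, ih, smul_mul_assoc, mul_assoc, hyx, mul_smul_comm,
        smul_smul, pow_succ, mul_assoc]
  intro n hn
  induction n, hn using Nat.le_induction with
  | base => simpa using hxη
  | succ n hn ih =>
    have hx1 : x * x ^ (n - 1) = x ^ n := by
      rw [← pow_succ', Nat.sub_add_cancel hn]
    have step : x ^ (n + 1) * η = x * (x ^ n * η) := by
      rw [pow_succ', mul_assoc]
    rw [step, ih, mul_add, mul_smul_comm, mul_smul_comm, ← mul_assoc x η, hxη,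
      add_mul, smul_mul_assoc, smul_mul_assoc, mul_assoc ξ y, hyxn, mul_smul_comm,
      ← mul_assoc x (ξ * x ^ (n-1)) y, ← mul_assoc x ξ (x ^ (n-1)), hxξ,
      smul_mul_assoc, smul_mul_assoc, mul_assoc ξ x (x ^ (n-1)), hx1]
    have hsum : (∑ k ∈ Finset.range (n + 1), q ^ (2 * k)) =
        1 + q ^ 2 * ∑ k ∈ Finset.range n, q ^ (2 * k) := by
      rw [Finset.sum_range_succ' (fun k => q ^ (2 * k)) n]
      simp [Finset.mul_sum, pow_add, mul_comm, pow_mul]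
      ring_nf
    simp only [Nat.add_sub_cancel, hsum, mul_assoc ξ (x^n) y]
    rw [mul_assoc η x (x ^ n), ← pow_succ']
    match_scalars
    · ring
    · field_simp
      have h1 : q ^ n * q⁻¹ ^ n = 1 := by rw [← mul_pow, mul_inv_cancel₀ hq, one_pow]
      linear_combination (q ^ 2 - 1) * h1
end

section
/- In the quantum plane at the cube root of unity, every element of Z(A) commutes with every element of the bimodule A¹ of 1-forms: for all a ∈ Z(A) and α ∈ A¹, aα = αa. -/
/-- in the quantum plane at the cube root of unity, every element
of Z(A) (the span of the monomials x^{3i}y^{3j}) commutes with every element of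
the bimodule A¹ of 1-forms (elements ξu + ηv with u, v in the quantum plane A,
A¹ having right basis ξ, η). -/
theorem center_commutes_with_one_forms (q : ℂ) (hq : IsPrimitiveRoot q 3)
    (Ω : Type*) [Ring Ω] [Algebra ℂ Ω] (x y ξ η : Ω)
    (hxy : x * y = q • (y * x))
    (hxξ : x * ξ = (q ^ 2) • (ξ * x))
    (hxη : x * η = q • (η * x) + (q ^ 2 - 1) • (ξ * y))
    (hyξ : y * ξ = q • (ξ * y))
    (hyη : y * η = (q ^ 2) • (η * y)) :
    ∀ a ∈ Submodule.span ℂ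
        (Set.range fun p : ℕ × ℕ => x ^ (3 * p.1) * y ^ (3 * p.2)),
      ∀ u ∈ Algebra.adjoin ℂ ({x, y} : Set Ω),
        ∀ v ∈ Algebra.adjoin ℂ ({x, y} : Set Ω),
          a * (ξ * u + η * v) = (ξ * u + η * v) * a := by
  have hq3 : q ^ 3 = 1 := hq.pow_eq_one
  have hqsum : 1 + q + q ^ 2 = 0 := by
    have h1 : q ≠ 1 := hq.ne_one (by norm_num)
    have h2 : (q - 1) * (1 + q + q ^ 2) = 0 := by
      have : (q - 1) * (1 + q + q ^ 2) = q ^ 3 - 1 := by ring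
      rw [this, hq3]; ring
    rcases mul_eq_zero.mp h2 with h | h
    · exact absurd (sub_eq_zero.mp h) h1
    · exact h
  -- extended relations (right-associated forms)
  have hxy' : ∀ w : Ω, x * (y * w) = q • (y * (x * w)) := fun w => by
    rw [← mul_assoc, hxy, smul_mul_assoc, mul_assoc]
  have hxξ' : ∀ w : Ω, x * (ξ * w) = (q ^ 2) • (ξ * (x * w)) := fun w => by
    rw [← mul_assoc, hxξ, smul_mul_assoc, mul_assoc]
  have hxη' : ∀ w : Ω, x * (η * w) = q • (η * (x * w)) + (q ^ 2 - 1) • (ξ * (y * w)) :=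
    fun w => by
    rw [← mul_assoc, hxη, add_mul, smul_mul_assoc, smul_mul_assoc, mul_assoc, mul_assoc]
  have hyξ' : ∀ w : Ω, y * (ξ * w) = q • (ξ * (y * w)) := fun w => by
    rw [← mul_assoc, hyξ, smul_mul_assoc, mul_assoc]
  have hyη' : ∀ w : Ω, y * (η * w) = (q ^ 2) • (η * (y * w)) := fun w => by
    rw [← mul_assoc, hyη, smul_mul_assoc, mul_assoc]
  have c3 : ∀ z w : Ω, z ^ 3 * w = z * (z * (z * w)) := fun z w => by
    rw [pow_succ, pow_two, mul_assoc, mul_assoc]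
  have c3' : ∀ z w : Ω, w * z ^ 3 = w * (z * (z * z)) := fun z w => by
    rw [pow_succ, pow_two, mul_assoc]
  -- the cubes x^3, y^3 commute with x, y, ξ, η
  have hX3y : Commute (x ^ 3) y := by
    show x ^ 3 * y = y * x ^ 3
    rw [c3, c3']
    simp only [hxy, hxy', mul_smul_comm, smul_smul, mul_assoc]
    match_scalars
    linear_combination hq3
  have hX3ξ : Commute (x ^ 3) ξ := by
    show x ^ 3 * ξ = ξ * x ^ 3
    rw [c3, c3']
    simp only [hxξ, hxξ', mul_smul_comm, smul_smul, mul_assoc]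
    match_scalars
    linear_combination (q ^ 3 + 1) * hq3
  have hX3η : Commute (x ^ 3) η := by
    show x ^ 3 * η = η * x ^ 3
    rw [c3, c3']
    simp only [hxη, hxη', hxξ, hxξ', hxy, hxy', mul_add, smul_add, mul_smul_comm,
      smul_smul, mul_assoc]
    match_scalars
    · linear_combination hq3
    · linear_combination ((q ^ 2 - 1) * q ^ 2 * (q ^ 2 - q + 1)) * hqsum
  have hY3x : Commute (y ^ 3) x := by
    show y ^ 3 * x = x * y ^ 3
    rw [c3, c3']
    simp only [hxy, hxy', mul_smul_comm, smul_smul, mul_assoc]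
    match_scalars
    linear_combination -hq3
  have hY3ξ : Commute (y ^ 3) ξ := by
    show y ^ 3 * ξ = ξ * y ^ 3
    rw [c3, c3']
    simp only [hyξ, hyξ', mul_smul_comm, smul_smul, mul_assoc]
    match_scalars
    linear_combination hq3
  have hY3η : Commute (y ^ 3) η := by
    show y ^ 3 * η = η * y ^ 3
    rw [c3, c3']
    simp only [hyη, hyη', mul_smul_comm, smul_smul, mul_assoc]
    match_scalars
    linear_combination (q ^ 3 + 1) * hq3
  have hX3x : Commute (x ^ 3) x := (Commute.refl x).pow_left 3
  have hY3y : Commute (y ^ 3) y := (Commute.refl y).pow_left 3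
  -- elements of the span commute with x, y, ξ, η
  have key : ∀ a ∈ Submodule.span ℂ
      (Set.range fun p : ℕ × ℕ => x ^ (3 * p.1) * y ^ (3 * p.2)),
      Commute a x ∧ Commute a y ∧ Commute a ξ ∧ Commute a η := by
    intro a ha
    induction ha using Submodule.span_induction with
    | mem b hb =>
      obtain ⟨p, rfl⟩ := hb
      simp only [pow_mul]
      exact ⟨(hX3x.pow_left p.1).mul_left (hY3x.pow_left p.2),
        (hX3y.pow_left p.1).mul_left (hY3y.pow_left p.2),
        (hX3ξ.pow_left p.1).mul_left (hY3ξ.pow_left p.2),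
        (hX3η.pow_left p.1).mul_left (hY3η.pow_left p.2)⟩
    | zero => exact ⟨Commute.zero_left _, Commute.zero_left _, Commute.zero_left _,
        Commute.zero_left _⟩
    | add b c _ _ hb hc => exact ⟨hb.1.add_left hc.1, hb.2.1.add_left hc.2.1,
        hb.2.2.1.add_left hc.2.2.1, hb.2.2.2.add_left hc.2.2.2⟩
    | smul c b _ hb => exact ⟨hb.1.smul_left c, hb.2.1.smul_left c,
        hb.2.2.1.smul_left c, hb.2.2.2.smul_left c⟩
  intro a ha u hu v hv
  obtain ⟨hax, hay, haξ, haη⟩ := key a ha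
  have hadj : ∀ w ∈ Algebra.adjoin ℂ ({x, y} : Set Ω), Commute a w := by
    intro w hw
    induction hw using Algebra.adjoin_induction with
    | mem z hz =>
      rcases hz with rfl | rfl
      · exact hax
      · exact hay
    | algebraMap c => exact (Algebra.commutes c a).symm
    | add s t _ _ hs ht => exact hs.add_right ht
    | mul s t _ _ hs ht => exact hs.mul_right ht
  have hu' : Commute a u := hadj u hu
  have hv' : Commute a v := hadj v hv
  calc a * (ξ * u + η * v) = (a * ξ) * u + (a * η) * v := by
        rw [mul_add, mul_assoc, mul_assoc]
    _ = ξ * (a * u) + η * (a * v) := by rw [haξ.eq, haη.eq, mul_assoc, mul_assoc]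
    _ = ξ * (u * a) + η * (v * a) := by rw [hu'.eq, hv'.eq]
    _ = (ξ * u + η * v) * a := by rw [add_mul, mul_assoc, mul_assoc]
end

section
/- In the quantum plane at the cube root of unity, the element c₁ξ + c₂η with c₁ = a·xy − b·xy³ and c₂ = b·x²y² (for a, b ∈ Z(A)) lies in the centre of the bimodule A¹; i.e., it commutes with both x and y. -/
/-- in the quantum plane at the cube root of unity, the 1-form
c₁ξ + c₂η with c₁ = a·xy − b·xy³ and c₂ = b·x²y², for a, b ∈ Z(A) (the span of
the monomials x^{3i}y^{3j}), lies in the centre of the bimodule A¹: it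
commutes with both generators x and y (hence with every element of A). -/
theorem central_one_form (q : ℂ) (hq : IsPrimitiveRoot q 3)
    (Ω : Type*) [Ring Ω] [Algebra ℂ Ω] (x y ξ η : Ω)
    (hxy : x * y = q • (y * x))
    (hxξ : x * ξ = (q ^ 2) • (ξ * x))
    (hxη : x * η = q • (η * x) + (q ^ 2 - 1) • (ξ * y))
    (hyξ : y * ξ = q • (ξ * y))
    (hyη : y * η = (q ^ 2) • (η * y)) :
    ∀ a ∈ Submodule.span ℂ
        (Set.range fun p : ℕ × ℕ => x ^ (3 * p.1) * y ^ (3 * p.2)),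
      ∀ b ∈ Submodule.span ℂ
        (Set.range fun p : ℕ × ℕ => x ^ (3 * p.1) * y ^ (3 * p.2)),
        x * ((a * x * y - b * x * y ^ 3) * ξ + (b * x ^ 2 * y ^ 2) * η)
          = ((a * x * y - b * x * y ^ 3) * ξ + (b * x ^ 2 * y ^ 2) * η) * x ∧
        y * ((a * x * y - b * x * y ^ 3) * ξ + (b * x ^ 2 * y ^ 2) * η)
          = ((a * x * y - b * x * y ^ 3) * ξ + (b * x ^ 2 * y ^ 2) * η) * y := by
  have hq3 : q^3 = 1 := hq.pow_eq_one
  have h4 : q^4 = q := by linear_combination q*hq3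
  have h5 : q^5 = q^2 := by linear_combination q^2*hq3
  have h6 : q^6 = 1 := by linear_combination (q^3+1)*hq3
  have h7 : q^7 = q := by linear_combination (q^4+q)*hq3
  have h8 : q^8 = q^2 := by linear_combination (q^5+q^2)*hq3
  have h9 : q^9 = 1 := by linear_combination (q^6+q^3+1)*hq3
  have hyx : y * x = q^2 • (x * y) := by
    rw [hxy, smul_smul, show q^2*q = 1 by linear_combination hq3, one_smul]
  have hξx : ξ * x = q • (x * ξ) := by
    rw [hxξ, smul_smul, show q*q^2 = 1 by linear_combination hq3, one_smul]
  have hξy : ξ * y = q^2 • (y * ξ) := by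
    rw [hyξ, smul_smul, show q^2*q = 1 by linear_combination hq3, one_smul]
  have hηy : η * y = q • (y * η) := by
    rw [hyη, smul_smul, show q*q^2 = 1 by linear_combination hq3, one_smul]
  have hηx : η * x = q^2 • (x * η) + (q - 1) • (y * ξ) := by
    have h : q^2 • (x * η) = η * x + (1 - q) • (y * ξ) := by
      rw [hxη, smul_add, smul_smul, smul_smul, show q^2*q = 1 by linear_combination hq3,
        one_smul, hξy, smul_smul,
        show q^2*(q^2-1)*q^2 = 1-q by linear_combination (q^3-q+1)*hq3]
    rw [h]; module
  have yxc : ∀ c : Ω, y*(x*c) = q^2 • (x*(y*c)) := fun c => by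
    rw [← mul_assoc, hyx, smul_mul_assoc, mul_assoc]
  have ξxc : ∀ c : Ω, ξ*(x*c) = q • (x*(ξ*c)) := fun c => by
    rw [← mul_assoc, hξx, smul_mul_assoc, mul_assoc]
  have ξyc : ∀ c : Ω, ξ*(y*c) = q^2 • (y*(ξ*c)) := fun c => by
    rw [← mul_assoc, hξy, smul_mul_assoc, mul_assoc]
  have ηyc : ∀ c : Ω, η*(y*c) = q • (y*(η*c)) := fun c => by
    rw [← mul_assoc, hηy, smul_mul_assoc, mul_assoc]
  have ηxc : ∀ c : Ω, η*(x*c) = q^2 • (x*(η*c)) + (q-1) • (y*(ξ*c)) := fun c => by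
    rw [← mul_assoc, hηx, add_mul, smul_mul_assoc, smul_mul_assoc, mul_assoc, mul_assoc]
  -- core identities
  have hX1 : x*(x*y*ξ) = (x*y*ξ)*x := by
    simp only [mul_assoc, hξx, hyx, hξy, hηx, hηy, yxc, ξxc, ξyc, ηxc, ηyc,
      mul_smul_comm, smul_smul, smul_add, mul_add]
    try match_scalars <;> (ring_nf; simp only [hq3, h4, h5, h6, h7, h8, h9]; try ring_nf)
  have hX2 : x*((x^2*y^2)*η) - x*((x*y^3)*ξ) = ((x^2*y^2)*η)*x - ((x*y^3)*ξ)*x := by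
    simp only [pow_succ, pow_zero, one_mul, mul_assoc, hξx, hyx, hξy, hηx, hηy,
      yxc, ξxc, ξyc, ηxc, ηyc, mul_smul_comm, smul_smul, smul_add, mul_add]
    try match_scalars <;> (ring_nf; simp only [hq3, h4, h5, h6, h7, h8, h9]; try ring_nf)
  have hY1 : y*(x*y*ξ) = (x*y*ξ)*y := by
    simp only [mul_assoc, hξx, hyx, hξy, hηx, hηy, yxc, ξxc, ξyc, ηxc, ηyc,
      mul_smul_comm, smul_smul, smul_add, mul_add]
    try match_scalars <;> (ring_nf; simp only [hq3, h4, h5, h6, h7, h8, h9]; try ring_nf)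
  have hY2 : y*((x*y^3)*ξ) = ((x*y^3)*ξ)*y := by
    simp only [pow_succ, pow_zero, one_mul, mul_assoc, hξx, hyx, hξy, hηx, hηy,
      yxc, ξxc, ξyc, ηxc, ηyc, mul_smul_comm, smul_smul, smul_add, mul_add]
    try match_scalars <;> (ring_nf; simp only [hq3, h4, h5, h6, h7, h8, h9]; try ring_nf)
  have hY3 : y*((x^2*y^2)*η) = ((x^2*y^2)*η)*y := by
    simp only [pow_succ, pow_zero, one_mul, mul_assoc, hξx, hyx, hξy, hηx, hηy,
      yxc, ξxc, ξyc, ηxc, ηyc, mul_smul_comm, smul_smul, smul_add, mul_add]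
    try match_scalars <;> (ring_nf; simp only [hq3, h4, h5, h6, h7, h8, h9]; try ring_nf)
  have L1 : ∀ n : ℕ, x * y^n = (q^n) • (y^n * x) := by
    intro n; induction n with
    | zero => simp
    | succ n ih =>
      rw [pow_succ, ← mul_assoc, ih, smul_mul_assoc, mul_assoc, hxy, mul_smul_comm,
        smul_smul, ← pow_succ, ← mul_assoc]
  have L2 : ∀ n : ℕ, y * x^n = ((q^2)^n) • (x^n * y) := by
    intro n; induction n with
    | zero => simp
    | succ n ih =>
      rw [pow_succ, ← mul_assoc, ih, smul_mul_assoc, mul_assoc, hyx, mul_smul_comm,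
        smul_smul, ← pow_succ, ← mul_assoc]
  have hcomm : ∀ z ∈ Submodule.span ℂ
      (Set.range fun p : ℕ × ℕ => x ^ (3 * p.1) * y ^ (3 * p.2)),
      x * z = z * x ∧ y * z = z * y := by
    intro z hz
    induction hz using Submodule.span_induction with
    | mem w hw =>
      obtain ⟨⟨i, j⟩, rfl⟩ := hw
      constructor
      · rw [← mul_assoc, ((Commute.refl x).pow_right (3*i)).eq, mul_assoc, L1,
          show q^(3*(i,j).2) = 1 by rw [pow_mul, hq3, one_pow], one_smul, ← mul_assoc]
      · rw [← mul_assoc, L2, show ((q^2)^(3*(i,j).1)) = 1 by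
          rw [pow_mul, show (q^2)^3 = 1 by linear_combination (q^3+1)*hq3, one_pow],
          one_smul, mul_assoc, ((Commute.refl y).pow_right (3*(i,j).2)).eq, ← mul_assoc]
    | zero => simp
    | add u v _ _ hu hv => constructor <;> simp [mul_add, add_mul, hu.1, hu.2, hv.1, hv.2]
    | smul c u _ hu => constructor <;> simp [mul_smul_comm, smul_mul_assoc, hu.1, hu.2]
  intro a ha b hb
  obtain ⟨hax, hay⟩ := hcomm a ha
  obtain ⟨hbx, hby⟩ := hcomm b hb
  constructor
  · calc x * ((a * x * y - b * x * y ^ 3) * ξ + (b * x ^ 2 * y ^ 2) * η)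
        = (x*a) * (x*y*ξ) - (x*b) * ((x*y^3)*ξ) + (x*b) * ((x^2*y^2)*η) := by noncomm_ring
      _ = (a*x) * (x*y*ξ) - (b*x) * ((x*y^3)*ξ) + (b*x) * ((x^2*y^2)*η) := by rw [hax, hbx]
      _ = a * (x*(x*y*ξ)) + b * (x*((x^2*y^2)*η) - x*((x*y^3)*ξ)) := by noncomm_ring
      _ = a * ((x*y*ξ)*x) + b * (((x^2*y^2)*η)*x - ((x*y^3)*ξ)*x) := by rw [hX1, hX2]
      _ = ((a * x * y - b * x * y ^ 3) * ξ + (b * x ^ 2 * y ^ 2) * η) * x := by noncomm_ring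
  · calc y * ((a * x * y - b * x * y ^ 3) * ξ + (b * x ^ 2 * y ^ 2) * η)
        = (y*a) * (x*y*ξ) - (y*b) * ((x*y^3)*ξ) + (y*b) * ((x^2*y^2)*η) := by noncomm_ring
      _ = (a*y) * (x*y*ξ) - (b*y) * ((x*y^3)*ξ) + (b*y) * ((x^2*y^2)*η) := by rw [hay, hby]
      _ = a * (y*(x*y*ξ)) - b * (y*((x*y^3)*ξ)) + b * (y*((x^2*y^2)*η)) := by noncomm_ring
      _ = a * ((x*y*ξ)*y) - b * (((x*y^3)*ξ)*y) + b * (((x^2*y^2)*η)*y) := by rw [hY1, hY2, hY3]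
      _ = ((a * x * y - b * x * y ^ 3) * ξ + (b * x ^ 2 * y ^ 2) * η) * y := by noncomm_ring
end

section
/- General left-to-right rewriting in the quantum plane calculus: for a = Σ a_{pr} x^p y^r and b = Σ b_{st} x^s y^t with complex coefficients, one has aξ + bη = ξ·ã + η·b̃, where ã = Σ (q^{2p+r} a_{pr} + q^{2r−2}(q²−1) Q_{p+1} b_{p+1,r−1}) x^p y^r (the term with r = 0 being q^{2p} a_{p0} x^p) and b̃ = Σ q^{2t+s} b_{st} x^s y^t, with Q_n = Σ_{k=1}^n q^{2(k−1)}. -/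
section
variable {Ω : Type*} [Ring Ω] [Algebra ℂ Ω] (q : ℂ) (x y ξ η : Ω)

lemma pow_mul_ξ' (hxξ : x * ξ = (q ^ 2) • (ξ * x)) (p : ℕ) :
    x ^ p * ξ = (q ^ (2 * p)) • (ξ * x ^ p) := by
  induction p with
  | zero => simp
  | succ n ih =>
    rw [pow_succ, mul_assoc, hxξ, mul_smul_comm, ← mul_assoc, ih]
    rw [smul_mul_assoc, smul_smul, mul_assoc]
    match_scalars; ring

lemma xpow_mul_y' (hxy : x * y = q • (y * x)) (p : ℕ) :
    x ^ p * y = (q ^ p) • (y * x ^ p) := by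
  induction p with
  | zero => simp
  | succ n ih =>
    rw [pow_succ, mul_assoc, hxy, mul_smul_comm, ← mul_assoc, ih]
    rw [smul_mul_assoc, smul_smul, mul_assoc]
    match_scalars; ring

lemma qsum_shift (m : ℕ) :
    q * ∑ k ∈ Finset.range (m + 1), q ^ (m + 2 * k)
      = ∑ k ∈ Finset.range (m + 1), q ^ (m + 1 + 2 * k) := by
  rw [Finset.mul_sum]
  exact Finset.sum_congr rfl fun k _ => by ring

lemma xpow_mul_η (hxη : x * η = q • (η * x) + (q ^ 2 - 1) • (ξ * y))
    (hxξ : x * ξ = (q ^ 2) • (ξ * x)) (hxy : x * y = q • (y * x)) (p : ℕ) :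
    x ^ p * η = (q ^ p) • (η * x ^ p)
      + ((q ^ 2 - 1) * (∑ k ∈ Finset.range p, q ^ (p - 1 + 2 * k)))
          • (ξ * (y * x ^ (p - 1))) := by
  induction p with
  | zero => simp
  | succ n ih =>
    match n, ih with
    | 0, _ => simpa using hxη
    | m + 1, ih =>
      rw [pow_succ, mul_assoc, hxη, mul_add, mul_smul_comm, mul_smul_comm,
        ← mul_assoc, ← mul_assoc, ih, pow_mul_ξ' q x ξ hxξ (m + 1)]
      have hs : (m + 1 + 1 - 1 : ℕ) = m + 1 := rfl
      have hs2 : (m + 1 - 1 : ℕ) = m := rfl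
      rw [hs, hs2]
      rw [add_mul, smul_mul_assoc, smul_mul_assoc, mul_assoc η, ← pow_succ,
        mul_assoc ξ, mul_assoc y, ← pow_succ, smul_mul_assoc, smul_smul,
        mul_assoc ξ, xpow_mul_y' q x y hxy (m + 1)]
      simp only [mul_smul_comm, smul_smul]
      match_scalars
      · ring
      · conv_rhs => rw [Finset.sum_range_succ, ← qsum_shift q m]
        ring

end

section
variable {Ω : Type*} [Ring Ω] [Algebra ℂ Ω] (q : ℂ) (x y ξ η : Ω)

lemma ypow_mul_ξ' (hyξ : y * ξ = q • (ξ * y)) (r : ℕ) :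
    y ^ r * ξ = (q ^ r) • (ξ * y ^ r) := by
  induction r with
  | zero => simp
  | succ n ih =>
    rw [pow_succ, mul_assoc, hyξ, mul_smul_comm, ← mul_assoc, ih]
    rw [smul_mul_assoc, smul_smul, mul_assoc]
    match_scalars; ring

lemma ypow_mul_η' (hyη : y * η = (q ^ 2) • (η * y)) (r : ℕ) :
    y ^ r * η = (q ^ (2 * r)) • (η * y ^ r) := by
  induction r with
  | zero => simp
  | succ n ih =>
    rw [pow_succ, mul_assoc, hyη, mul_smul_comm, ← mul_assoc, ih]
    rw [smul_mul_assoc, smul_smul, mul_assoc]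
    match_scalars; ring

lemma mon_ξ (hxξ : x * ξ = (q ^ 2) • (ξ * x)) (hyξ : y * ξ = q • (ξ * y))
    (p r : ℕ) :
    x ^ p * y ^ r * ξ = (q ^ (2 * p + r)) • (ξ * (x ^ p * y ^ r)) := by
  rw [mul_assoc, ypow_mul_ξ' q y ξ hyξ r, mul_smul_comm, ← mul_assoc,
    pow_mul_ξ' q x ξ hxξ p, smul_mul_assoc, smul_smul, mul_assoc]
  match_scalars; ring

lemma qsum_shift2 (m : ℕ) :
    ∑ k ∈ Finset.range (m + 1), q ^ (m + 2 * k)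
      = q ^ m * ∑ k ∈ Finset.range (m + 1), q ^ (2 * k) := by
  rw [Finset.mul_sum]
  exact Finset.sum_congr rfl fun k _ => by rw [pow_add]

lemma mon_η (hxη : x * η = q • (η * x) + (q ^ 2 - 1) • (ξ * y))
    (hxξ : x * ξ = (q ^ 2) • (ξ * x)) (hxy : x * y = q • (y * x))
    (hyη : y * η = (q ^ 2) • (η * y)) (p r : ℕ) :
    x ^ p * y ^ r * η = (q ^ (2 * r + p)) • (η * (x ^ p * y ^ r))
      + (q ^ (2 * r) * (q ^ 2 - 1) * ∑ k ∈ Finset.range p, q ^ (2 * k))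
          • (ξ * (x ^ (p - 1) * y ^ (r + 1))) := by
  rw [mul_assoc, ypow_mul_η' q y η hyη r, mul_smul_comm, ← mul_assoc,
    xpow_mul_η q x y ξ η hxη hxξ hxy p]
  cases p with
  | zero => simp
  | succ m =>
    have h2 : (q : ℂ) ^ m • ((ξ * (y * x ^ m)) * y ^ r)
        = ξ * (x ^ m * y ^ (r + 1)) := by
      rw [← smul_mul_assoc, ← mul_smul_comm, ← xpow_mul_y' q x y hxy m,
        mul_assoc, mul_assoc, ← pow_succ']
    rw [Nat.add_sub_cancel, ← h2, qsum_shift2 q m]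
    simp only [add_mul, smul_mul_assoc, smul_add, mul_assoc, smul_smul,
      mul_smul_comm]
    match_scalars <;> ring

end

/-- general left-to-right rewriting in the quantum plane
calculus.  For a = Σ a_{pr} x^p y^r and b = Σ b_{st} x^s y^t (finitely
supported complex coefficients `ac`, `bc`), one has aξ + bη = ξ·ã + η·b̃,
where ã = Σ (q^{2p+r} a_{pr} + q^{2(r−1)}(q²−1) Q_{p+1} b_{p+1,r−1}) x^p y^r
(the term with r = 0 being q^{2p} a_{p0} x^p) and b̃ = Σ q^{2t+s} b_{st} x^s y^t,
with Q_n = Σ_{k=1}^n q^{2(k−1)} = Σ_{k=0}^{n-1} q^{2k}. -/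
theorem general_rewriting (q : ℂ) (hq : q ≠ 0)
    (Ω : Type*) [Ring Ω] [Algebra ℂ Ω] (x y ξ η : Ω)
    (hxy : x * y = q • (y * x))
    (hxξ : x * ξ = (q ^ 2) • (ξ * x))
    (hxη : x * η = q • (η * x) + (q ^ 2 - 1) • (ξ * y))
    (hyξ : y * ξ = q • (ξ * y))
    (hyη : y * η = (q ^ 2) • (η * y))
    (ac bc : (ℕ × ℕ) →₀ ℂ) :
    (ac.sum fun p c => c • (x ^ p.1 * y ^ p.2)) * ξ
      + (bc.sum fun p c => c • (x ^ p.1 * y ^ p.2)) * η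
    = ξ * (∑ p ∈ ac.support ∪
            bc.support.image (fun st : ℕ × ℕ => (st.1 - 1, st.2 + 1)),
          (q ^ (2 * p.1 + p.2) * ac p +
            (if p.2 = 0 then 0 else
              q ^ (2 * (p.2 - 1)) * (q ^ 2 - 1) *
                (∑ k ∈ Finset.range (p.1 + 1), q ^ (2 * k)) *
                bc (p.1 + 1, p.2 - 1))) • (x ^ p.1 * y ^ p.2))
      + η * (bc.sum fun p c => (q ^ (2 * p.2 + p.1) * c) • (x ^ p.1 * y ^ p.2)) := by
  classical
  set g : ℕ × ℕ → ℕ × ℕ := fun st => (st.1 - 1, st.2 + 1) with hg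
  set U : Finset (ℕ × ℕ) := ac.support ∪ bc.support.image g with hU
  set B : ℕ × ℕ → ℂ := fun p =>
    (if p.2 = 0 then 0 else
      q ^ (2 * (p.2 - 1)) * (q ^ 2 - 1) *
        (∑ k ∈ Finset.range (p.1 + 1), q ^ (2 * k)) *
        bc (p.1 + 1, p.2 - 1)) with hB
  -- a * ξ
  have hA : (ac.sum fun p c => c • (x ^ p.1 * y ^ p.2)) * ξ
      = ξ * ∑ p ∈ ac.support,
          (q ^ (2 * p.1 + p.2) * ac p) • (x ^ p.1 * y ^ p.2) := by
    rw [Finsupp.sum, Finset.sum_mul, Finset.mul_sum]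
    refine Finset.sum_congr rfl fun p _ => ?_
    rw [smul_mul_assoc, mon_ξ q x y ξ hxξ hyξ p.1 p.2, mul_smul_comm,
      smul_smul]
    match_scalars; ring
  -- b * η
  have hBη : (bc.sum fun p c => c • (x ^ p.1 * y ^ p.2)) * η
      = η * (bc.sum fun p c =>
            (q ^ (2 * p.2 + p.1) * c) • (x ^ p.1 * y ^ p.2))
        + ξ * ∑ p ∈ bc.support,
            (q ^ (2 * p.2) * (q ^ 2 - 1) *
              (∑ k ∈ Finset.range p.1, q ^ (2 * k)) * bc p)
              • (x ^ (p.1 - 1) * y ^ (p.2 + 1)) := by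
    rw [Finsupp.sum, Finsupp.sum, Finset.sum_mul, Finset.mul_sum,
      Finset.mul_sum, ← Finset.sum_add_distrib]
    refine Finset.sum_congr rfl fun p _ => ?_
    rw [smul_mul_assoc, mon_η q x y ξ η hxη hxξ hxy hyη p.1 p.2, smul_add,
      mul_smul_comm, mul_smul_comm, smul_smul, smul_smul]
    match_scalars <;> ring
  -- split union sum
  have hsplit : ∑ p ∈ U,
      (q ^ (2 * p.1 + p.2) * ac p + B p) • (x ^ p.1 * y ^ p.2)
      = (∑ p ∈ U, (q ^ (2 * p.1 + p.2) * ac p) • (x ^ p.1 * y ^ p.2))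
        + ∑ p ∈ U, B p • (x ^ p.1 * y ^ p.2) := by
    rw [← Finset.sum_add_distrib]
    exact Finset.sum_congr rfl fun p _ => add_smul _ _ _
  -- A-part over union = over ac.support
  have hAU : ∑ p ∈ U, (q ^ (2 * p.1 + p.2) * ac p) • (x ^ p.1 * y ^ p.2)
      = ∑ p ∈ ac.support,
          (q ^ (2 * p.1 + p.2) * ac p) • (x ^ p.1 * y ^ p.2) := by
    refine (Finset.sum_subset Finset.subset_union_left fun p _ hp => ?_).symm
    rw [Finsupp.notMem_support_iff.mp hp, mul_zero, zero_smul]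
  -- B-part over union = the ξ-correction sum from b
  set S' : Finset (ℕ × ℕ) :=
    (bc.support.filter fun st => st.1 ≠ 0).image g with hS'
  have hBU : ∑ p ∈ U, B p • (x ^ p.1 * y ^ p.2)
      = ∑ p ∈ bc.support,
          (q ^ (2 * p.2) * (q ^ 2 - 1) *
            (∑ k ∈ Finset.range p.1, q ^ (2 * k)) * bc p)
            • (x ^ (p.1 - 1) * y ^ (p.2 + 1)) := by
    have hsub : S' ⊆ U := by
      refine Finset.Subset.trans (Finset.image_subset_image ?_)
        Finset.subset_union_right
      exact Finset.filter_subset _ _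
    have step1 : ∑ p ∈ U, B p • (x ^ p.1 * y ^ p.2)
        = ∑ p ∈ S', B p • (x ^ p.1 * y ^ p.2) := by
      refine (Finset.sum_subset hsub fun p _ hp => ?_).symm
      by_cases h0 : p.2 = 0
      · simp [hB, h0]
      · by_cases hb : bc (p.1 + 1, p.2 - 1) = 0
        · simp [hB, h0, hb]
        · exfalso; apply hp
          rw [hS', Finset.mem_image]
          refine ⟨(p.1 + 1, p.2 - 1), ?_, ?_⟩
          · rw [Finset.mem_filter]
            exact ⟨Finsupp.mem_support_iff.mpr hb, by simp⟩
          · rw [hg]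
            ext <;> simp <;> omega
    have step2 : ∑ p ∈ S', B p • (x ^ p.1 * y ^ p.2)
        = ∑ st ∈ bc.support.filter fun st => st.1 ≠ 0,
            B (g st) • (x ^ (g st).1 * y ^ (g st).2) := by
      refine Finset.sum_image fun a ha b hb hab => ?_
      rw [Finset.mem_coe, Finset.mem_filter] at ha hb
      rw [hg] at hab
      have h1 := congrArg Prod.fst hab
      have h2 := congrArg Prod.snd hab
      simp only at h1 h2
      ext
      · omega
      · omega
    have step3 : ∀ st ∈ bc.support.filter fun st => st.1 ≠ 0,
        B (g st) • (x ^ (g st).1 * y ^ (g st).2)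
          = (q ^ (2 * st.2) * (q ^ 2 - 1) *
              (∑ k ∈ Finset.range st.1, q ^ (2 * k)) * bc st)
              • (x ^ (st.1 - 1) * y ^ (st.2 + 1)) := by
      intro st hst
      rw [Finset.mem_filter] at hst
      have h1 : st.1 - 1 + 1 = st.1 := by omega
      simp only [hB, hg, Nat.add_sub_cancel, h1, if_neg (Nat.succ_ne_zero _)]
    have step4 : ∑ st ∈ bc.support.filter (fun st => st.1 ≠ 0),
          (q ^ (2 * st.2) * (q ^ 2 - 1) *
            (∑ k ∈ Finset.range st.1, q ^ (2 * k)) * bc st)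
            • (x ^ (st.1 - 1) * y ^ (st.2 + 1))
        = ∑ st ∈ bc.support,
            (q ^ (2 * st.2) * (q ^ 2 - 1) *
              (∑ k ∈ Finset.range st.1, q ^ (2 * k)) * bc st)
              • (x ^ (st.1 - 1) * y ^ (st.2 + 1)) := by
      refine Finset.sum_subset (Finset.filter_subset _ _) fun p _ hp => ?_
      have : p.1 = 0 := by
        by_contra h
        exact hp (Finset.mem_filter.mpr ⟨by assumption, h⟩)
      simp [this]
    rw [step1, step2, Finset.sum_congr rfl step3, step4]
  rw [hA, hBη, hsplit, hAU, hBU, mul_add]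
  abel
end
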